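/- F is differentiable at every tensor M ∈ ℝ^{{1,…,L}×S^{T+1}}, and its gradient is ∇F(M) = C(M) + E(M), where E(M)(ℓ, x_0,…,x_T) = Σ_{i=0}^{T−1} E_i(ℓ, x_i) with E_i(ℓ, y) = Σ_{m=1}^{L} Σ_{(z,w)∈S×S} ∇W_{mℓ}(z − y)ᵀ (w − z + (1/T) Σ_{n=1}^{L} [∇W_{mn} * P_{−1,i}(M)(n,·)](z) − (1/T) b_m(z)) · P_{−1,i,i+1}(M)(m, z, w). -/

import Mathlib

open scoped BigOperators Classical

noncomputable section

namespace Stmt2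

variable {d T L : ℕ} {S : Finset (EuclideanSpace ℝ (Fin d))}

/-- The marginal over species and the `i`-th coordinate:
`P_{-1,i}(M)(ℓ,y) = Σ_{x : x_i = y} M(ℓ,x)`. -/
def marg (M : Fin L × (Fin (T + 1) → {x // x ∈ S}) → ℝ) (i : Fin (T + 1))
    (ℓ : Fin L) (y : {x // x ∈ S}) : ℝ :=
  ∑ x : Fin (T + 1) → {x // x ∈ S}, if x i = y then M (ℓ, x) else 0

/-- `P_{-1,i,i+1}(M)(ℓ,y,z) = Σ_{x : x_i = y, x_{i+1} = z} M(ℓ,x)`. -/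
def margPair (M : Fin L × (Fin (T + 1) → {x // x ∈ S}) → ℝ) (i : Fin T)
    (ℓ : Fin L) (y z : {x // x ∈ S}) : ℝ :=
  ∑ x : Fin (T + 1) → {x // x ∈ S},
    if x i.castSucc = y ∧ x i.succ = z then M (ℓ, x) else 0

/-- `[∇W_{ℓm} * P_{-1,i}(M)(m,·)](y) = Σ_{z ∈ S} ∇W_{ℓm}(y - z) P_{-1,i}(M)(m,z)`. -/
def convW (W : Fin L → Fin L → EuclideanSpace ℝ (Fin d) → ℝ)
    (M : Fin L × (Fin (T + 1) → {x // x ∈ S}) → ℝ) (ℓ m : Fin L)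
    (i : Fin (T + 1)) (y : EuclideanSpace ℝ (Fin d)) : EuclideanSpace ℝ (Fin d) :=
  ∑ z : {x // x ∈ S}, marg M i m z • gradient (W ℓ m) (y - (z : EuclideanSpace ℝ (Fin d)))

/-- The multi-species cost tensor `C(M)(ℓ,x_0,…,x_T) = (1/T) Σ_i V_ℓ(x_i)
 + Σ_i (T/2) ‖x_{i+1} - x_i + (1/T) Σ_m [∇W_{ℓm} * P_{-1,i}(M)(m,·)](x_i) - (1/T) b_ℓ(x_i)‖²`. -/
def costC (W : Fin L → Fin L → EuclideanSpace ℝ (Fin d) → ℝ)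
    (b : Fin L → EuclideanSpace ℝ (Fin d) → EuclideanSpace ℝ (Fin d))
    (V : Fin L → EuclideanSpace ℝ (Fin d) → ℝ)
    (M : Fin L × (Fin (T + 1) → {x // x ∈ S}) → ℝ)
    (p : Fin L × (Fin (T + 1) → {x // x ∈ S})) : ℝ :=
  (1 / (T : ℝ)) * ∑ i : Fin T, V p.1 (p.2 i.castSucc : EuclideanSpace ℝ (Fin d))
  + ∑ i : Fin T, ((T : ℝ) / 2) *
    ‖(p.2 i.succ : EuclideanSpace ℝ (Fin d)) - (p.2 i.castSucc : EuclideanSpace ℝ (Fin d))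
      + (1 / (T : ℝ)) • ∑ m : Fin L,
          convW W M p.1 m i.castSucc (p.2 i.castSucc : EuclideanSpace ℝ (Fin d))
      - (1 / (T : ℝ)) • b p.1 (p.2 i.castSucc : EuclideanSpace ℝ (Fin d))‖ ^ 2

/-- `F(M) = ⟨C(M), M⟩ = Σ_{ℓ,x} C(M)(ℓ,x) M(ℓ,x)`. -/
def Ffun (W : Fin L → Fin L → EuclideanSpace ℝ (Fin d) → ℝ)
    (b : Fin L → EuclideanSpace ℝ (Fin d) → EuclideanSpace ℝ (Fin d))
    (V : Fin L → EuclideanSpace ℝ (Fin d) → ℝ)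
    (M : Fin L × (Fin (T + 1) → {x // x ∈ S}) → ℝ) : ℝ :=
  ∑ p : Fin L × (Fin (T + 1) → {x // x ∈ S}), costC W b V M p * M p

/-- `E_i(ℓ,y) = Σ_{m} Σ_{(z,w) ∈ S×S} ∇W_{mℓ}(z-y)ᵀ
 (w - z + (1/T) Σ_n [∇W_{mn} * P_{-1,i}(M)(n,·)](z) - (1/T) b_m(z)) P_{-1,i,i+1}(M)(m,z,w)`. -/
def Ei (W : Fin L → Fin L → EuclideanSpace ℝ (Fin d) → ℝ)
    (b : Fin L → EuclideanSpace ℝ (Fin d) → EuclideanSpace ℝ (Fin d))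
    (M : Fin L × (Fin (T + 1) → {x // x ∈ S}) → ℝ)
    (i : Fin T) (ℓ : Fin L) (y : EuclideanSpace ℝ (Fin d)) : ℝ :=
  ∑ m : Fin L, ∑ z : {x // x ∈ S}, ∑ w : {x // x ∈ S},
    (inner ℝ (gradient (W m ℓ) ((z : EuclideanSpace ℝ (Fin d)) - y))
      ((w : EuclideanSpace ℝ (Fin d)) - (z : EuclideanSpace ℝ (Fin d))
        + (1 / (T : ℝ)) • ∑ n : Fin L, convW W M m n i.castSucc (z : EuclideanSpace ℝ (Fin d))
        - (1 / (T : ℝ)) • b m (z : EuclideanSpace ℝ (Fin d))) : ℝ)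
    * margPair M i m z w

/-- `E(M)(ℓ,x_0,…,x_T) = Σ_{i=0}^{T-1} E_i(ℓ,x_i)`. -/
def Etens (W : Fin L → Fin L → EuclideanSpace ℝ (Fin d) → ℝ)
    (b : Fin L → EuclideanSpace ℝ (Fin d) → EuclideanSpace ℝ (Fin d))
    (M : Fin L × (Fin (T + 1) → {x // x ∈ S}) → ℝ)
    (p : Fin L × (Fin (T + 1) → {x // x ∈ S})) : ℝ :=
  ∑ i : Fin T, Ei W b M i p.1 (p.2 i.castSucc : EuclideanSpace ℝ (Fin d))


/-! ### Auxiliary machinery for the proof -/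

section Aux

variable {d T L : ℕ} {S : Finset (EuclideanSpace ℝ (Fin d))}

/-- `marg` as a continuous linear map in `N`. -/
def margCLM (i : Fin (T + 1)) (ℓ : Fin L) (y : {x // x ∈ S}) :
    EuclideanSpace ℝ (Fin L × (Fin (T + 1) → {x // x ∈ S})) →L[ℝ] ℝ :=
  ∑ x : Fin (T + 1) → {x // x ∈ S},
    if x i = y then EuclideanSpace.proj ((ℓ, x) : Fin L × (Fin (T + 1) → {x // x ∈ S})) else 0

lemma margCLM_apply (i : Fin (T + 1)) (ℓ : Fin L) (y : {x // x ∈ S})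
    (N : EuclideanSpace ℝ (Fin L × (Fin (T + 1) → {x // x ∈ S}))) :
    margCLM i ℓ y N = marg N i ℓ y := by
  rw [margCLM, marg, ContinuousLinearMap.sum_apply]
  refine Finset.sum_congr rfl fun x _ => ?_
  split <;> simp

/-- `convW` as a continuous linear map in `N`. -/
def convCLM (W : Fin L → Fin L → EuclideanSpace ℝ (Fin d) → ℝ) (ℓ m : Fin L)
    (i : Fin (T + 1)) (y : EuclideanSpace ℝ (Fin d)) :
    EuclideanSpace ℝ (Fin L × (Fin (T + 1) → {x // x ∈ S})) →L[ℝ] EuclideanSpace ℝ (Fin d) :=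
  ∑ z : {x // x ∈ S},
    (margCLM i m z).smulRight (gradient (W ℓ m) (y - (z : EuclideanSpace ℝ (Fin d))))

lemma convCLM_apply (W : Fin L → Fin L → EuclideanSpace ℝ (Fin d) → ℝ) (ℓ m : Fin L)
    (i : Fin (T + 1)) (y : EuclideanSpace ℝ (Fin d))
    (N : EuclideanSpace ℝ (Fin L × (Fin (T + 1) → {x // x ∈ S}))) :
    convCLM W ℓ m i y N = convW W N ℓ m i y := by
  rw [convCLM, convW, ContinuousLinearMap.sum_apply]
  refine Finset.sum_congr rfl fun z _ => ?_
  rw [ContinuousLinearMap.smulRight_apply, margCLM_apply]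

/-- The vector appearing inside the squared norm in the cost. -/
def wvec (W : Fin L → Fin L → EuclideanSpace ℝ (Fin d) → ℝ)
    (b : Fin L → EuclideanSpace ℝ (Fin d) → EuclideanSpace ℝ (Fin d))
    (M : Fin L × (Fin (T + 1) → {x // x ∈ S}) → ℝ)
    (p : Fin L × (Fin (T + 1) → {x // x ∈ S})) (i : Fin T) : EuclideanSpace ℝ (Fin d) :=
  (p.2 i.succ : EuclideanSpace ℝ (Fin d)) - (p.2 i.castSucc : EuclideanSpace ℝ (Fin d))
    + (1 / (T : ℝ)) • ∑ m : Fin L,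
        convW W M p.1 m i.castSucc (p.2 i.castSucc : EuclideanSpace ℝ (Fin d))
    - (1 / (T : ℝ)) • b p.1 (p.2 i.castSucc : EuclideanSpace ℝ (Fin d))

lemma costC_eq_inner (W : Fin L → Fin L → EuclideanSpace ℝ (Fin d) → ℝ)
    (b : Fin L → EuclideanSpace ℝ (Fin d) → EuclideanSpace ℝ (Fin d))
    (V : Fin L → EuclideanSpace ℝ (Fin d) → ℝ)
    (M : Fin L × (Fin (T + 1) → {x // x ∈ S}) → ℝ)
    (p : Fin L × (Fin (T + 1) → {x // x ∈ S})) :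
    costC W b V M p =
      (1 / (T : ℝ)) * ∑ i : Fin T, V p.1 (p.2 i.castSucc : EuclideanSpace ℝ (Fin d))
      + ∑ i : Fin T, ((T : ℝ) / 2) * (inner ℝ (wvec W b M p i) (wvec W b M p i) : ℝ) := by
  rw [costC]
  congr 1
  refine Finset.sum_congr rfl fun i _ => ?_
  rw [wvec, real_inner_self_eq_norm_sq]

/-- The linear part of `N ↦ wvec W b N p i`. -/
def Lmap (W : Fin L → Fin L → EuclideanSpace ℝ (Fin d) → ℝ)
    (p : Fin L × (Fin (T + 1) → {x // x ∈ S})) (i : Fin T) :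
    EuclideanSpace ℝ (Fin L × (Fin (T + 1) → {x // x ∈ S})) →L[ℝ] EuclideanSpace ℝ (Fin d) :=
  (1 / (T : ℝ)) • ∑ m : Fin L,
    convCLM W p.1 m i.castSucc (p.2 i.castSucc : EuclideanSpace ℝ (Fin d))

lemma Lmap_apply (W : Fin L → Fin L → EuclideanSpace ℝ (Fin d) → ℝ)
    (p : Fin L × (Fin (T + 1) → {x // x ∈ S})) (i : Fin T)
    (N : EuclideanSpace ℝ (Fin L × (Fin (T + 1) → {x // x ∈ S}))) :
    Lmap W p i N = (1 / (T : ℝ)) • ∑ m : Fin L,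
      convW W N p.1 m i.castSucc (p.2 i.castSucc : EuclideanSpace ℝ (Fin d)) := by
  rw [Lmap, ContinuousLinearMap.smul_apply, ContinuousLinearMap.sum_apply]
  congr 1
  exact Finset.sum_congr rfl fun m _ => convCLM_apply ..

lemma hasFDerivAt_wvec (W : Fin L → Fin L → EuclideanSpace ℝ (Fin d) → ℝ)
    (b : Fin L → EuclideanSpace ℝ (Fin d) → EuclideanSpace ℝ (Fin d))
    (M : EuclideanSpace ℝ (Fin L × (Fin (T + 1) → {x // x ∈ S})))
    (p : Fin L × (Fin (T + 1) → {x // x ∈ S})) (i : Fin T) :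
    HasFDerivAt
      (fun N : EuclideanSpace ℝ (Fin L × (Fin (T + 1) → {x // x ∈ S})) => wvec W b N p i)
      (Lmap W p i) M := by
  have h0 := (Lmap (S := S) W p i).hasFDerivAt (x := M)
  have h1 := (h0.const_add ((p.2 i.succ : EuclideanSpace ℝ (Fin d))
      - (p.2 i.castSucc : EuclideanSpace ℝ (Fin d)))).sub_const
      ((1 / (T : ℝ)) • b p.1 (p.2 i.castSucc : EuclideanSpace ℝ (Fin d)))
  refine h1.congr_of_eventuallyEq (Filter.Eventually.of_forall fun N => ?_)
  simp only [Lmap_apply]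
  rfl

/-- The derivative of `N ↦ costC W b V N p` at `M`. -/
def derivCost (W : Fin L → Fin L → EuclideanSpace ℝ (Fin d) → ℝ)
    (b : Fin L → EuclideanSpace ℝ (Fin d) → EuclideanSpace ℝ (Fin d))
    (M : EuclideanSpace ℝ (Fin L × (Fin (T + 1) → {x // x ∈ S})))
    (p : Fin L × (Fin (T + 1) → {x // x ∈ S})) :
    EuclideanSpace ℝ (Fin L × (Fin (T + 1) → {x // x ∈ S})) →L[ℝ] ℝ :=
  ∑ i : Fin T, ((T : ℝ) / 2) •
    ((fderivInnerCLM ℝ (wvec W b M p i, wvec W b M p i)).comp ((Lmap W p i).prod (Lmap W p i)))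

lemma hasFDerivAt_costC (W : Fin L → Fin L → EuclideanSpace ℝ (Fin d) → ℝ)
    (b : Fin L → EuclideanSpace ℝ (Fin d) → EuclideanSpace ℝ (Fin d))
    (V : Fin L → EuclideanSpace ℝ (Fin d) → ℝ)
    (M : EuclideanSpace ℝ (Fin L × (Fin (T + 1) → {x // x ∈ S})))
    (p : Fin L × (Fin (T + 1) → {x // x ∈ S})) :
    HasFDerivAt
      (fun N : EuclideanSpace ℝ (Fin L × (Fin (T + 1) → {x // x ∈ S})) => costC W b V N p)
      (derivCost W b M p) M := by
  have h : ∀ i : Fin T, HasFDerivAt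
      (fun N : EuclideanSpace ℝ (Fin L × (Fin (T + 1) → {x // x ∈ S})) =>
        ((T : ℝ) / 2) * (inner ℝ (wvec W b N p i) (wvec W b N p i) : ℝ))
      (((T : ℝ) / 2) • ((fderivInnerCLM ℝ (wvec W b M p i, wvec W b M p i)).comp
        ((Lmap W p i).prod (Lmap W p i)))) M := fun i =>
    ((hasFDerivAt_wvec W b M p i).inner ℝ (hasFDerivAt_wvec W b M p i)).const_mul _
  have hsum := HasFDerivAt.fun_sum (u := (Finset.univ : Finset (Fin T))) fun i _ => h i
  have h2 := hsum.const_add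
      ((1 / (T : ℝ)) * ∑ i : Fin T, V p.1 (p.2 i.castSucc : EuclideanSpace ℝ (Fin d)))
  exact h2.congr_of_eventuallyEq
    (Filter.Eventually.of_forall fun N => costC_eq_inner W b V N p)

lemma derivCost_apply (hT : (T : ℝ) ≠ 0)
    (W : Fin L → Fin L → EuclideanSpace ℝ (Fin d) → ℝ)
    (b : Fin L → EuclideanSpace ℝ (Fin d) → EuclideanSpace ℝ (Fin d))
    (M H : EuclideanSpace ℝ (Fin L × (Fin (T + 1) → {x // x ∈ S})))
    (p : Fin L × (Fin (T + 1) → {x // x ∈ S})) :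
    derivCost W b M p H = ∑ i : Fin T,
      (inner ℝ (wvec W b M p i)
        (∑ m : Fin L, convW W H p.1 m i.castSucc
          (p.2 i.castSucc : EuclideanSpace ℝ (Fin d))) : ℝ) := by
  rw [derivCost, ContinuousLinearMap.sum_apply]
  refine Finset.sum_congr rfl fun i _ => ?_
  rw [ContinuousLinearMap.smul_apply, ContinuousLinearMap.comp_apply,
    ContinuousLinearMap.prod_apply, fderivInnerCLM_apply]
  simp only [Lmap_apply]
  rw [real_inner_smul_right, real_inner_smul_left,
    real_inner_comm (∑ m : Fin L, convW W H p.1 m i.castSucc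
      (p.2 i.castSucc : EuclideanSpace ℝ (Fin d))) (wvec W b M p i), smul_eq_mul]
  field_simp
  ring

lemma inner_conv_sum (W : Fin L → Fin L → EuclideanSpace ℝ (Fin d) → ℝ) (ℓ : Fin L)
    (w : EuclideanSpace ℝ (Fin d)) (y : {x // x ∈ S}) (i : Fin (T + 1))
    (H : EuclideanSpace ℝ (Fin L × (Fin (T + 1) → {x // x ∈ S}))) :
    (inner ℝ w (∑ m : Fin L, convW W H ℓ m i (y : EuclideanSpace ℝ (Fin d))) : ℝ)
      = ∑ q : Fin L × (Fin (T + 1) → {x // x ∈ S}), H q *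
          (inner ℝ w (gradient (W ℓ q.1)
            ((y : EuclideanSpace ℝ (Fin d)) - (q.2 i : EuclideanSpace ℝ (Fin d)))) : ℝ) := by
  rw [inner_sum, Fintype.sum_prod_type]
  refine Finset.sum_congr rfl fun m _ => ?_
  rw [convW, inner_sum]
  calc
    ∑ z : {x // x ∈ S}, (inner ℝ w (marg H i m z •
          gradient (W ℓ m) ((y : EuclideanSpace ℝ (Fin d)) - (z : EuclideanSpace ℝ (Fin d)))) : ℝ)
        = ∑ z : {x // x ∈ S}, ∑ x : Fin (T + 1) → {x // x ∈ S},
            (if x i = z then H (m, x) * (inner ℝ w (gradient (W ℓ m)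
              ((y : EuclideanSpace ℝ (Fin d)) - (z : EuclideanSpace ℝ (Fin d)))) : ℝ) else 0) := by
          refine Finset.sum_congr rfl fun z _ => ?_
          rw [real_inner_smul_right, marg, Finset.sum_mul]
          refine Finset.sum_congr rfl fun x _ => ?_
          split <;> simp
    _ = ∑ x : Fin (T + 1) → {x // x ∈ S}, ∑ z : {x // x ∈ S},
            (if x i = z then H (m, x) * (inner ℝ w (gradient (W ℓ m)
              ((y : EuclideanSpace ℝ (Fin d)) - (z : EuclideanSpace ℝ (Fin d)))) : ℝ) else 0) :=
          Finset.sum_comm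
    _ = ∑ x : Fin (T + 1) → {x // x ∈ S}, H (m, x) * (inner ℝ w (gradient (W ℓ m)
            ((y : EuclideanSpace ℝ (Fin d)) - ((x i : {x // x ∈ S}) : EuclideanSpace ℝ (Fin d)))) : ℝ) := by
          refine Finset.sum_congr rfl fun x _ => ?_
          rw [Finset.sum_ite_eq]
          simp

lemma Ei_expand (W : Fin L → Fin L → EuclideanSpace ℝ (Fin d) → ℝ)
    (b : Fin L → EuclideanSpace ℝ (Fin d) → EuclideanSpace ℝ (Fin d))
    (M : Fin L × (Fin (T + 1) → {x // x ∈ S}) → ℝ) (i : Fin T) (ℓ₀ : Fin L)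
    (y : EuclideanSpace ℝ (Fin d)) :
    Ei W b M i ℓ₀ y = ∑ p : Fin L × (Fin (T + 1) → {x // x ∈ S}), M p *
      (inner ℝ (gradient (W p.1 ℓ₀) ((p.2 i.castSucc : EuclideanSpace ℝ (Fin d)) - y))
        (wvec W b M p i) : ℝ) := by
  rw [Ei, Fintype.sum_prod_type]
  refine Finset.sum_congr rfl fun m _ => ?_
  set c : {x // x ∈ S} → {x // x ∈ S} → ℝ := fun z w =>
    (inner ℝ (gradient (W m ℓ₀) ((z : EuclideanSpace ℝ (Fin d)) - y))
      ((w : EuclideanSpace ℝ (Fin d)) - (z : EuclideanSpace ℝ (Fin d))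
        + (1 / (T : ℝ)) • ∑ n : Fin L,
            convW W M m n i.castSucc (z : EuclideanSpace ℝ (Fin d))
        - (1 / (T : ℝ)) • b m (z : EuclideanSpace ℝ (Fin d))) : ℝ) with hc
  calc
    ∑ z : {x // x ∈ S}, ∑ w : {x // x ∈ S}, c z w * margPair M i m z w
        = ∑ z : {x // x ∈ S}, ∑ w : {x // x ∈ S}, ∑ x : Fin (T + 1) → {x // x ∈ S},
            (if x i.castSucc = z ∧ x i.succ = w then c z w * M (m, x) else 0) := by
          refine Finset.sum_congr rfl fun z _ => Finset.sum_congr rfl fun w _ => ?_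
          rw [margPair, Finset.mul_sum]
          refine Finset.sum_congr rfl fun x _ => ?_
          split <;> simp
    _ = ∑ x : Fin (T + 1) → {x // x ∈ S}, ∑ z : {x // x ∈ S}, ∑ w : {x // x ∈ S},
            (if x i.castSucc = z ∧ x i.succ = w then c z w * M (m, x) else 0) :=
          (Finset.sum_congr rfl fun z _ => Finset.sum_comm).trans Finset.sum_comm
    _ = ∑ x : Fin (T + 1) → {x // x ∈ S}, M (m, x) * c (x i.castSucc) (x i.succ) := by
          refine Finset.sum_congr rfl fun x _ => ?_
          have hz : ∀ z : {x // x ∈ S}, (∑ w : {x // x ∈ S},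
              if x i.castSucc = z ∧ x i.succ = w then c z w * M (m, x) else 0)
                = if x i.castSucc = z then c z (x i.succ) * M (m, x) else 0 := by
            intro z
            by_cases h : x i.castSucc = z
            · simp only [h, true_and]
              rw [Finset.sum_ite_eq]
              simp
            · simp [h]
          rw [Finset.sum_congr rfl fun z _ => hz z, Finset.sum_ite_eq]
          simp [mul_comm]

/-- The generic term of the cubic part. -/
def tfun (W : Fin L → Fin L → EuclideanSpace ℝ (Fin d) → ℝ)
    (b : Fin L → EuclideanSpace ℝ (Fin d) → EuclideanSpace ℝ (Fin d))
    (M H : EuclideanSpace ℝ (Fin L × (Fin (T + 1) → {x // x ∈ S})))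
    (p : Fin L × (Fin (T + 1) → {x // x ∈ S})) (i : Fin T)
    (q : Fin L × (Fin (T + 1) → {x // x ∈ S})) : ℝ :=
  M p * (H q * (inner ℝ (wvec W b M p i) (gradient (W p.1 q.1)
    ((p.2 i.castSucc : EuclideanSpace ℝ (Fin d))
      - (q.2 i.castSucc : EuclideanSpace ℝ (Fin d)))) : ℝ))

lemma key_identity (hT : (T : ℝ) ≠ 0)
    (W : Fin L → Fin L → EuclideanSpace ℝ (Fin d) → ℝ)
    (b : Fin L → EuclideanSpace ℝ (Fin d) → EuclideanSpace ℝ (Fin d))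
    (M H : EuclideanSpace ℝ (Fin L × (Fin (T + 1) → {x // x ∈ S}))) :
    ∑ p : Fin L × (Fin (T + 1) → {x // x ∈ S}), M p * derivCost W b M p H
      = ∑ q : Fin L × (Fin (T + 1) → {x // x ∈ S}), Etens W b M q * H q := by
  have hL : ∀ p, M p * derivCost W b M p H = ∑ i : Fin T,
      ∑ q : Fin L × (Fin (T + 1) → {x // x ∈ S}), tfun W b M H p i q := by
    intro p
    rw [derivCost_apply hT, Finset.mul_sum]
    refine Finset.sum_congr rfl fun i _ => ?_
    rw [inner_conv_sum, Finset.mul_sum]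
    refine Finset.sum_congr rfl fun q _ => ?_
    rw [tfun]
  have hR : ∀ q, Etens W b M q * H q = ∑ i : Fin T,
      ∑ p : Fin L × (Fin (T + 1) → {x // x ∈ S}), tfun W b M H p i q := by
    intro q
    rw [Etens, Finset.sum_mul]
    refine Finset.sum_congr rfl fun i _ => ?_
    rw [Ei_expand, Finset.sum_mul]
    refine Finset.sum_congr rfl fun p _ => ?_
    rw [tfun, real_inner_comm]
    ring
  calc
    ∑ p : Fin L × (Fin (T + 1) → {x // x ∈ S}), M p * derivCost W b M p H
        = ∑ p : Fin L × (Fin (T + 1) → {x // x ∈ S}), ∑ i : Fin T,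
            ∑ q : Fin L × (Fin (T + 1) → {x // x ∈ S}), tfun W b M H p i q :=
          Finset.sum_congr rfl fun p _ => hL p
    _ = ∑ i : Fin T, ∑ p : Fin L × (Fin (T + 1) → {x // x ∈ S}),
            ∑ q : Fin L × (Fin (T + 1) → {x // x ∈ S}), tfun W b M H p i q := Finset.sum_comm
    _ = ∑ i : Fin T, ∑ q : Fin L × (Fin (T + 1) → {x // x ∈ S}),
            ∑ p : Fin L × (Fin (T + 1) → {x // x ∈ S}), tfun W b M H p i q :=
          Finset.sum_congr rfl fun i _ => Finset.sum_comm
    _ = ∑ q : Fin L × (Fin (T + 1) → {x // x ∈ S}), ∑ i : Fin T,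
            ∑ p : Fin L × (Fin (T + 1) → {x // x ∈ S}), tfun W b M H p i q := Finset.sum_comm
    _ = ∑ q : Fin L × (Fin (T + 1) → {x // x ∈ S}), Etens W b M q * H q :=
          Finset.sum_congr rfl fun q _ => (hR q).symm

end Aux

set_option maxHeartbeats 1000000 in
/-- `F` is differentiable at every multi-species tensor `M`, with
gradient `∇F(M) = C(M) + E(M)`. -/
theorem statement_2 (hT : 1 ≤ T) (hL : 1 ≤ L) (hS : S.Nonempty)
    (W : Fin L → Fin L → EuclideanSpace ℝ (Fin d) → ℝ)
    (hW : ∀ ℓ m, ContDiff ℝ 1 (W ℓ m))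
    (hWsymm : ∀ ℓ m, W ℓ m = W m ℓ)
    (hWeven : ∀ ℓ m x, W ℓ m x = W ℓ m (-x))
    (b : Fin L → EuclideanSpace ℝ (Fin d) → EuclideanSpace ℝ (Fin d))
    (hb : ∀ ℓ, Continuous (b ℓ))
    (V : Fin L → EuclideanSpace ℝ (Fin d) → ℝ)
    (M : EuclideanSpace ℝ (Fin L × (Fin (T + 1) → {x // x ∈ S}))) :
    DifferentiableAt ℝ
      (fun N : EuclideanSpace ℝ (Fin L × (Fin (T + 1) → {x // x ∈ S})) => Ffun W b V N) M ∧
    ∀ p : Fin L × (Fin (T + 1) → {x // x ∈ S}),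
      gradient
        (fun N : EuclideanSpace ℝ (Fin L × (Fin (T + 1) → {x // x ∈ S})) => Ffun W b V N) M p
        = costC W b V M p + Etens W b M p := by
  have hTne : (T : ℝ) ≠ 0 := by
    have : (0 : ℕ) < T := hT
    exact_mod_cast this.ne'
  have hterm : ∀ p : Fin L × (Fin (T + 1) → {x // x ∈ S}), HasFDerivAt
      (fun N : EuclideanSpace ℝ (Fin L × (Fin (T + 1) → {x // x ∈ S})) =>
        costC W b V N p * N p)
      (costC W b V M p • EuclideanSpace.proj p + M p • derivCost W b M p) M := by
    intro p
    have hproj : HasFDerivAt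
        (fun N : EuclideanSpace ℝ (Fin L × (Fin (T + 1) → {x // x ∈ S})) => (N p : ℝ))
        (EuclideanSpace.proj p : EuclideanSpace ℝ (Fin L × (Fin (T + 1) → {x // x ∈ S})) →L[ℝ] ℝ)
        M :=
      ((EuclideanSpace.proj p : EuclideanSpace ℝ (Fin L × (Fin (T + 1) → {x // x ∈ S})) →L[ℝ]
          ℝ)).hasFDerivAt.congr_of_eventuallyEq
        (Filter.Eventually.of_forall fun N => rfl)
    exact (hasFDerivAt_costC W b V M p).mul hproj
  have hF : HasFDerivAt
      (fun N : EuclideanSpace ℝ (Fin L × (Fin (T + 1) → {x // x ∈ S})) => Ffun W b V N)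
      (∑ p : Fin L × (Fin (T + 1) → {x // x ∈ S}),
        (costC W b V M p • EuclideanSpace.proj p + M p • derivCost W b M p)) M :=
    HasFDerivAt.fun_sum fun p _ => hterm p
  set g : EuclideanSpace ℝ (Fin L × (Fin (T + 1) → {x // x ∈ S})) :=
    WithLp.toLp 2 (fun p => costC W b V M p + Etens W b M p) with hgdef
  have hdual : (InnerProductSpace.toDual ℝ
      (EuclideanSpace ℝ (Fin L × (Fin (T + 1) → {x // x ∈ S})))) g
      = ∑ p : Fin L × (Fin (T + 1) → {x // x ∈ S}),
        (costC W b V M p • EuclideanSpace.proj p + M p • derivCost W b M p) := by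
    ext H
    rw [InnerProductSpace.toDual_apply_apply, PiLp.inner_apply, ContinuousLinearMap.sum_apply]
    simp only [RCLike.inner_apply, conj_trivial, hgdef, ContinuousLinearMap.add_apply,
      ContinuousLinearMap.smul_apply, smul_eq_mul, PiLp.proj_apply, add_mul]
    rw [Finset.sum_congr rfl fun x _ => mul_comm (H x) (costC W b V M x + Etens W b M x)]
    simp only [add_mul]
    rw [Finset.sum_add_distrib, Finset.sum_add_distrib, key_identity hTne W b M H]
  have hg : HasGradientAt
      (fun N : EuclideanSpace ℝ (Fin L × (Fin (T + 1) → {x // x ∈ S})) => Ffun W b V N)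
      g M := by
    rw [hasGradientAt_iff_hasFDerivAt, hdual]
    exact hF
  refine ⟨hF.differentiableAt, fun p => ?_⟩
  rw [hg.gradient, hgdef]


end Stmt2
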